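/- Let ((T₁ᵢ, T₂ᵢ, C₁ᵢ, C₂ᵢ))_{i≥1} be an i.i.d. sequence where each (T₁ᵢ,T₂ᵢ) has the uniform distribution P₀ on A = ([1,2]×[1,2]) ∪ ([2,3]×[2,3]) ⊂ ℝ², each (C₁ᵢ,C₂ᵢ) is independent of (T₁ᵢ,T₂ᵢ) with distribution giving mass 1/3 to each of (1,3), (3,1), (4,4), and Z_{j,i} = min(T_{j,i}, C_{j,i}), Δ_{j,i} = 1{T_{j,i} ≤ C_{j,i}}. Then, almost surely, (1/n) ∑_{i=1}^n [ (1/2)·1{Δ₁ᵢ = 0, Δ₂ᵢ = 1, Z₂ᵢ ∈ [2,3]} + (1/2)·1{Δ₁ᵢ = 1, Δ₂ᵢ = 0, Z₁ᵢ ∈ [1,2]} ] converges to 1/6 as n → ∞. -/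

import Mathlib

open MeasureTheory ProbabilityTheory Filter

open scoped Classical

/-- The uniform distribution on `A = [1,2]×[1,2] ∪ [2,3]×[2,3]` (normalized
two-dimensional Lebesgue measure on `A`; `A` has Lebesgue measure `2`). -/
noncomputable def pruittP₀ : Measure (ℝ × ℝ) :=
  (2 : ENNReal)⁻¹ •
    (volume.restrict
      ((Set.Icc (1 : ℝ) 2 ×ˢ Set.Icc (1 : ℝ) 2) ∪
        (Set.Icc (2 : ℝ) 3 ×ˢ Set.Icc (2 : ℝ) 3)))

/-- The censoring distribution giving mass `1/3` to each of the points
`(1,3)`, `(3,1)`, `(4,4)`. -/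
noncomputable def pruittG : Measure (ℝ × ℝ) :=
  (3 : ENNReal)⁻¹ •
    (Measure.dirac ((1 : ℝ), (3 : ℝ)) + Measure.dirac ((3 : ℝ), (1 : ℝ)) +
      Measure.dirac ((4 : ℝ), (4 : ℝ)))

/-- The "big square" support set. -/
def pruittA : Set (ℝ × ℝ) :=
  (Set.Icc (1 : ℝ) 2 ×ˢ Set.Icc (1 : ℝ) 2) ∪ (Set.Icc (2 : ℝ) 3 ×ˢ Set.Icc (2 : ℝ) 3)

lemma measurableSet_pruittA : MeasurableSet pruittA :=
  (measurableSet_Icc.prod measurableSet_Icc).union (measurableSet_Icc.prod measurableSet_Icc)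

lemma vol_Icc_prod (a b c d : ℝ) :
    volume (Set.Icc a b ×ˢ Set.Icc c d) = ENNReal.ofReal (b - a) * ENNReal.ofReal (d - c) := by
  rw [Measure.volume_eq_prod, Measure.prod_prod, Real.volume_Icc, Real.volume_Icc]

instance : IsProbabilityMeasure pruittG := by
  constructor
  simp only [pruittG, Measure.smul_apply, Measure.add_apply, measure_univ, smul_eq_mul]
  norm_num
  rw [ENNReal.inv_mul_cancel] <;> norm_num

instance : IsProbabilityMeasure pruittP₀ := by
  constructor
  have hnull : volume ((Set.Icc (1:ℝ) 2 ×ˢ Set.Icc (1:ℝ) 2) ∩ (Set.Icc (2:ℝ) 3 ×ˢ Set.Icc (2:ℝ) 3)) = 0 := by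
    rw [Set.prod_inter_prod, Set.Icc_inter_Icc]
    norm_num [vol_Icc_prod, max_def, min_def]
  have := measure_union₀ (μ := (volume : Measure (ℝ × ℝ)))
    ((measurableSet_Icc.prod measurableSet_Icc) : MeasurableSet (Set.Icc (2:ℝ) 3 ×ˢ Set.Icc (2:ℝ) 3)).nullMeasurableSet hnull
  simp only [pruittP₀, Measure.smul_apply, Measure.restrict_apply MeasurableSet.univ,
    Set.univ_inter, smul_eq_mul]
  rw [this, vol_Icc_prod, vol_Icc_prod]
  norm_num
  rw [ENNReal.inv_mul_cancel] <;> norm_num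

lemma prod_pruittG (P : Measure (ℝ × ℝ)) [SigmaFinite P] :
    P.prod pruittG = (3 : ENNReal)⁻¹ •
      (P.map (fun x => (x, ((1:ℝ), (3:ℝ)))) + P.map (fun x => (x, ((3:ℝ), (1:ℝ)))) +
        P.map (fun x => (x, ((4:ℝ), (4:ℝ))))) := by
  apply Measure.prod_eq
  intro s t hs ht
  simp only [Measure.smul_apply, Measure.add_apply, smul_eq_mul,
    Measure.map_apply measurable_prodMk_right (hs.prod ht),
    Set.mk_preimage_prod_left_eq_if, pruittG, Measure.dirac_apply' _ ht,
    Set.indicator_apply, Pi.one_apply]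
  split_ifs <;> (try simp only [measure_empty]) <;> ring

def pS₁ : Set ((ℝ × ℝ) × (ℝ × ℝ)) :=
  {p | ¬p.1.1 ≤ p.2.1 ∧ p.1.2 ≤ p.2.2 ∧ min p.1.2 p.2.2 ∈ Set.Icc (2 : ℝ) 3}

def pS₂ : Set ((ℝ × ℝ) × (ℝ × ℝ)) :=
  {p | p.1.1 ≤ p.2.1 ∧ ¬p.1.2 ≤ p.2.2 ∧ min p.1.1 p.2.1 ∈ Set.Icc (1 : ℝ) 2}

lemma measurableSet_pS₁ : MeasurableSet pS₁ := by
  have h1 : MeasurableSet {p : (ℝ × ℝ) × (ℝ × ℝ) | p.1.1 ≤ p.2.1} :=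
    measurableSet_le measurable_fst.fst measurable_snd.fst
  have h2 : MeasurableSet {p : (ℝ × ℝ) × (ℝ × ℝ) | p.1.2 ≤ p.2.2} :=
    measurableSet_le measurable_fst.snd measurable_snd.snd
  have h3 : MeasurableSet ((fun p : (ℝ × ℝ) × (ℝ × ℝ) => min p.1.2 p.2.2) ⁻¹' Set.Icc (2:ℝ) 3) :=
    (measurable_fst.snd.min measurable_snd.snd) measurableSet_Icc
  have : pS₁ = {p : (ℝ × ℝ) × (ℝ × ℝ) | p.1.1 ≤ p.2.1}ᶜ ∩
      ({p : (ℝ × ℝ) × (ℝ × ℝ) | p.1.2 ≤ p.2.2} ∩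
        ((fun p : (ℝ × ℝ) × (ℝ × ℝ) => min p.1.2 p.2.2) ⁻¹' Set.Icc (2:ℝ) 3)) := by
    ext p; simp [pS₁, Set.mem_setOf_eq]
  rw [this]; exact h1.compl.inter (h2.inter h3)

lemma measurableSet_pS₂ : MeasurableSet pS₂ := by
  have h1 : MeasurableSet {p : (ℝ × ℝ) × (ℝ × ℝ) | p.1.1 ≤ p.2.1} :=
    measurableSet_le measurable_fst.fst measurable_snd.fst
  have h2 : MeasurableSet {p : (ℝ × ℝ) × (ℝ × ℝ) | p.1.2 ≤ p.2.2} :=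
    measurableSet_le measurable_fst.snd measurable_snd.snd
  have h3 : MeasurableSet ((fun p : (ℝ × ℝ) × (ℝ × ℝ) => min p.1.1 p.2.1) ⁻¹' Set.Icc (1:ℝ) 2) :=
    (measurable_fst.fst.min measurable_snd.fst) measurableSet_Icc
  have : pS₂ = {p : (ℝ × ℝ) × (ℝ × ℝ) | p.1.1 ≤ p.2.1} ∩
      ({p : (ℝ × ℝ) × (ℝ × ℝ) | p.1.2 ≤ p.2.2}ᶜ ∩
        ((fun p : (ℝ × ℝ) × (ℝ × ℝ) => min p.1.1 p.2.1) ⁻¹' Set.Icc (1:ℝ) 2)) := by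
    ext p; simp [pS₂, Set.mem_setOf_eq]
  rw [this]; exact h1.inter (h2.compl.inter h3)

lemma pruittP₀_apply (s : Set (ℝ × ℝ)) : pruittP₀ s = 2⁻¹ * volume (s ∩ pruittA) := by
  show ((2 : ENNReal)⁻¹ • volume.restrict pruittA) s = _
  simp [Measure.smul_apply, smul_eq_mul, Measure.restrict_apply' measurableSet_pruittA]

lemma volS₁a : volume ({x : ℝ × ℝ | ¬x.1 ≤ 1 ∧ x.2 ≤ 3 ∧ min x.2 3 ∈ Set.Icc (2:ℝ) 3}
    ∩ pruittA) = 1 := by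
  apply le_antisymm
  · have hsub : {x : ℝ × ℝ | ¬x.1 ≤ 1 ∧ x.2 ≤ 3 ∧ min x.2 3 ∈ Set.Icc (2:ℝ) 3} ∩ pruittA ⊆
        (Set.Icc (1:ℝ) 2 ×ˢ Set.Icc (2:ℝ) 2) ∪ (Set.Icc (2:ℝ) 3 ×ˢ Set.Icc (2:ℝ) 3) := by
      rintro ⟨x₁, x₂⟩ hx
      simp only [Set.mem_inter_iff, Set.mem_setOf_eq, Set.mem_Icc, le_min_iff, min_le_iff,
        not_le, pruittA, Set.mem_union, Set.mem_prod] at hx ⊢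
      obtain ⟨⟨h1, h2, ⟨h3, -⟩, -⟩, hA⟩ := hx
      rcases hA with ⟨ha, hb⟩ | h
      · exact Or.inl ⟨ha, h3, hb.2⟩
      · exact Or.inr h
    refine (measure_mono hsub).trans ((measure_union_le _ _).trans ?_)
    calc volume (Set.Icc (1:ℝ) 2 ×ˢ Set.Icc (2:ℝ) 2) +
          volume (Set.Icc (2:ℝ) 3 ×ˢ Set.Icc (2:ℝ) 3)
      _ = 1 := by rw [vol_Icc_prod, vol_Icc_prod]; norm_num
      _ ≤ 1 := le_refl _
  · have hsub : Set.Icc (2:ℝ) 3 ×ˢ Set.Icc (2:ℝ) 3 ⊆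
        {x : ℝ × ℝ | ¬x.1 ≤ 1 ∧ x.2 ≤ 3 ∧ min x.2 3 ∈ Set.Icc (2:ℝ) 3} ∩ pruittA := by
      rintro ⟨x₁, x₂⟩ hx
      simp only [Set.mem_prod, Set.mem_Icc] at hx
      refine ⟨⟨by push_neg; linarith [hx.1.1], hx.2.2, ?_⟩, Or.inr (by
        simp only [Set.mem_prod, Set.mem_Icc]; exact hx)⟩
      simp only [Set.mem_Icc, le_min_iff, min_le_iff]
      refine ⟨⟨hx.2.1, by norm_num⟩, Or.inl hx.2.2⟩
    have := measure_mono (μ := (volume : Measure (ℝ × ℝ))) hsub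
    rwa [vol_Icc_prod, show ENNReal.ofReal (3-2) * ENNReal.ofReal (3-2) = 1 by norm_num] at this

lemma volS₂b : volume ({x : ℝ × ℝ | x.1 ≤ 3 ∧ ¬x.2 ≤ 1 ∧ min x.1 3 ∈ Set.Icc (1:ℝ) 2}
    ∩ pruittA) = 1 := by
  apply le_antisymm
  · have hsub : {x : ℝ × ℝ | x.1 ≤ 3 ∧ ¬x.2 ≤ 1 ∧ min x.1 3 ∈ Set.Icc (1:ℝ) 2} ∩ pruittA ⊆
        (Set.Icc (1:ℝ) 2 ×ˢ Set.Icc (1:ℝ) 2) ∪ (Set.Icc (2:ℝ) 2 ×ˢ Set.Icc (2:ℝ) 3) := by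
      rintro ⟨x₁, x₂⟩ hx
      simp only [Set.mem_inter_iff, Set.mem_setOf_eq, Set.mem_Icc, le_min_iff, min_le_iff,
        not_le, pruittA, Set.mem_union, Set.mem_prod] at hx ⊢
      obtain ⟨⟨h1, h2, ⟨-, -⟩, h3⟩, hA⟩ := hx
      rcases hA with h | ⟨ha, hb⟩
      · exact Or.inl h
      · refine Or.inr ⟨⟨?_, ?_⟩, hb⟩ <;> rcases h3 with h3 | h3 <;> linarith [ha.1, ha.2]
    refine (measure_mono hsub).trans ((measure_union_le _ _).trans ?_)
    calc volume (Set.Icc (1:ℝ) 2 ×ˢ Set.Icc (1:ℝ) 2) +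
          volume (Set.Icc (2:ℝ) 2 ×ˢ Set.Icc (2:ℝ) 3)
      _ = 1 := by rw [vol_Icc_prod, vol_Icc_prod]; norm_num
      _ ≤ 1 := le_refl _
  · have hsub : Set.Icc (1:ℝ) 2 ×ˢ Set.Ioc (1:ℝ) 2 ⊆
        {x : ℝ × ℝ | x.1 ≤ 3 ∧ ¬x.2 ≤ 1 ∧ min x.1 3 ∈ Set.Icc (1:ℝ) 2} ∩ pruittA := by
      rintro ⟨x₁, x₂⟩ hx
      simp only [Set.mem_prod, Set.mem_Icc, Set.mem_Ioc] at hx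
      refine ⟨⟨by linarith [hx.1.2], by push_neg; exact hx.2.1, ?_⟩, Or.inl (by
        simp only [Set.mem_prod, Set.mem_Icc]
        exact ⟨hx.1, le_of_lt hx.2.1, hx.2.2⟩)⟩
      simp only [Set.mem_Icc, le_min_iff, min_le_iff]
      refine ⟨⟨hx.1.1, by norm_num⟩, Or.inl hx.1.2⟩
    have := measure_mono (μ := (volume : Measure (ℝ × ℝ))) hsub
    rw [Measure.volume_eq_prod, Measure.prod_prod, Real.volume_Icc, Real.volume_Ioc] at this
    rwa [show ENNReal.ofReal (2-1) * ENNReal.ofReal (2-1) = 1 by norm_num] at this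

lemma volS₁b : volume ({x : ℝ × ℝ | ¬x.1 ≤ 3 ∧ x.2 ≤ 1 ∧ min x.2 1 ∈ Set.Icc (2:ℝ) 3}
    ∩ pruittA) = 0 := by
  have : {x : ℝ × ℝ | ¬x.1 ≤ 3 ∧ x.2 ≤ 1 ∧ min x.2 1 ∈ Set.Icc (2:ℝ) 3} ∩ pruittA = ∅ := by
    ext ⟨x₁, x₂⟩
    simp only [Set.mem_inter_iff, Set.mem_setOf_eq, Set.mem_Icc, le_min_iff,
      Set.mem_empty_iff_false, iff_false, not_and, not_le]
    rintro ⟨-, -, ⟨-, h3⟩, -⟩ -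
    exact absurd h3 (by norm_num)
  rw [this, measure_empty]

lemma volS₁c : volume ({x : ℝ × ℝ | ¬x.1 ≤ 4 ∧ x.2 ≤ 4 ∧ min x.2 4 ∈ Set.Icc (2:ℝ) 3}
    ∩ pruittA) = 0 := by
  have : {x : ℝ × ℝ | ¬x.1 ≤ 4 ∧ x.2 ≤ 4 ∧ min x.2 4 ∈ Set.Icc (2:ℝ) 3} ∩ pruittA = ∅ := by
    ext ⟨x₁, x₂⟩
    simp only [Set.mem_inter_iff, Set.mem_setOf_eq, Set.mem_empty_iff_false, iff_false,
      not_and, pruittA, Set.mem_union, Set.mem_prod, Set.mem_Icc, not_le]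
    rintro ⟨h1, -, -, -⟩ (⟨⟨-, h⟩, -⟩ | ⟨⟨-, h⟩, -⟩) <;> linarith
  rw [this, measure_empty]

lemma volS₂a : volume ({x : ℝ × ℝ | x.1 ≤ 1 ∧ ¬x.2 ≤ 3 ∧ min x.1 1 ∈ Set.Icc (1:ℝ) 2}
    ∩ pruittA) = 0 := by
  have : {x : ℝ × ℝ | x.1 ≤ 1 ∧ ¬x.2 ≤ 3 ∧ min x.1 1 ∈ Set.Icc (1:ℝ) 2} ∩ pruittA = ∅ := by
    ext ⟨x₁, x₂⟩
    simp only [Set.mem_inter_iff, Set.mem_setOf_eq, Set.mem_empty_iff_false, iff_false,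
      not_and, pruittA, Set.mem_union, Set.mem_prod, Set.mem_Icc, not_le]
    rintro ⟨-, h2, -, -⟩ (⟨-, -, h⟩ | ⟨-, -, h⟩) <;> linarith
  rw [this, measure_empty]

lemma volS₂c : volume ({x : ℝ × ℝ | x.1 ≤ 4 ∧ ¬x.2 ≤ 4 ∧ min x.1 4 ∈ Set.Icc (1:ℝ) 2}
    ∩ pruittA) = 0 := by
  have : {x : ℝ × ℝ | x.1 ≤ 4 ∧ ¬x.2 ≤ 4 ∧ min x.1 4 ∈ Set.Icc (1:ℝ) 2} ∩ pruittA = ∅ := by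
    ext ⟨x₁, x₂⟩
    simp only [Set.mem_inter_iff, Set.mem_setOf_eq, Set.mem_empty_iff_false, iff_false,
      not_and, pruittA, Set.mem_union, Set.mem_prod, Set.mem_Icc, not_le]
    rintro ⟨-, h2, -, -⟩ (⟨-, -, h⟩ | ⟨-, -, h⟩) <;> linarith
  rw [this, measure_empty]

lemma inv6 : (6 : ENNReal)⁻¹ = 3⁻¹ * 2⁻¹ := by
  rw [← ENNReal.mul_inv (Or.inl (by norm_num)) (Or.inl (by norm_num))]
  norm_num

lemma measure_pS₁ : (pruittP₀.prod pruittG) pS₁ = 6⁻¹ := by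
  rw [prod_pruittG pruittP₀]
  simp only [Measure.smul_apply, Measure.add_apply, smul_eq_mul,
    Measure.map_apply measurable_prodMk_right measurableSet_pS₁]
  simp only [pS₁, Set.preimage_setOf_eq]
  rw [pruittP₀_apply, pruittP₀_apply, pruittP₀_apply]
  simp only [volS₁a, volS₁b, volS₁c]
  rw [inv6]
  ring

lemma measure_pS₂ : (pruittP₀.prod pruittG) pS₂ = 6⁻¹ := by
  rw [prod_pruittG pruittP₀]
  simp only [Measure.smul_apply, Measure.add_apply, smul_eq_mul,
    Measure.map_apply measurable_prodMk_right measurableSet_pS₂]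
  simp only [pS₂, Set.preimage_setOf_eq]
  rw [pruittP₀_apply, pruittP₀_apply, pruittP₀_apply]
  simp only [volS₂a, volS₂b, volS₂c]
  rw [inv6]
  ring

noncomputable def pruittf : (ℝ × ℝ) × (ℝ × ℝ) → ℝ := fun p =>
  (if ¬p.1.1 ≤ p.2.1 ∧ p.1.2 ≤ p.2.2 ∧ min p.1.2 p.2.2 ∈ Set.Icc (2 : ℝ) 3
    then (1 / 2 : ℝ) else 0) +
  (if p.1.1 ≤ p.2.1 ∧ ¬p.1.2 ≤ p.2.2 ∧ min p.1.1 p.2.1 ∈ Set.Icc (1 : ℝ) 2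
    then (1 / 2 : ℝ) else 0)

lemma pruittf_eq : pruittf = fun p =>
    pS₁.indicator (fun _ => (1 / 2 : ℝ)) p + pS₂.indicator (fun _ => (1 / 2 : ℝ)) p := by
  funext p
  simp only [pruittf, Set.indicator_apply, pS₁, pS₂, Set.mem_setOf_eq]

lemma measurable_pruittf : Measurable pruittf := by
  rw [pruittf_eq]
  exact (measurable_const.indicator measurableSet_pS₁).add
    (measurable_const.indicator measurableSet_pS₂)

lemma integrable_pruittf : Integrable pruittf (pruittP₀.prod pruittG) := by
  rw [pruittf_eq]
  exact ((integrable_const _).indicator measurableSet_pS₁).add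
    ((integrable_const _).indicator measurableSet_pS₂)

lemma integral_pruittf : ∫ p, pruittf p ∂(pruittP₀.prod pruittG) = 1 / 6 := by
  rw [pruittf_eq]
  rw [integral_add ((integrable_const _).indicator measurableSet_pS₁)
    ((integrable_const _).indicator measurableSet_pS₂),
    integral_indicator_const _ measurableSet_pS₁, integral_indicator_const _ measurableSet_pS₂,
    measureReal_def, measureReal_def, measure_pS₁, measure_pS₂]
  rw [smul_eq_mul, ENNReal.toReal_inv]
  norm_num

/-- Pruitt's example, law of large numbers: for i.i.d. data
`((T₁ᵢ,T₂ᵢ),(C₁ᵢ,C₂ᵢ)) ~ P₀ ⊗ G`, with `Z_{j,i} = min T_{j,i} C_{j,i}` and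
`Δ_{j,i} = 1{T_{j,i} ≤ C_{j,i}}`, almost surely
`(1/n) ∑_{i<n} [(1/2)·1{Δ₁ᵢ = 0, Δ₂ᵢ = 1, Z₂ᵢ ∈ [2,3]}
  + (1/2)·1{Δ₁ᵢ = 1, Δ₂ᵢ = 0, Z₁ᵢ ∈ [1,2]}] → 1/6`. -/
theorem stmt18 {Ω : Type*} [MeasurableSpace Ω] (μ : Measure Ω) [IsProbabilityMeasure μ]
    (T₁ T₂ C₁ C₂ : ℕ → Ω → ℝ)
    (hmeas : ∀ i, Measurable fun ω => ((T₁ i ω, T₂ i ω), (C₁ i ω, C₂ i ω)))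
    (hlaw : ∀ i, μ.map (fun ω => ((T₁ i ω, T₂ i ω), (C₁ i ω, C₂ i ω)))
      = pruittP₀.prod pruittG)
    (hindep : iIndepFun
      (fun i ω => ((T₁ i ω, T₂ i ω), (C₁ i ω, C₂ i ω))) μ) :
    ∀ᵐ ω ∂μ, Tendsto (fun n : ℕ =>
        (1 / (n : ℝ)) * ∑ i ∈ Finset.range n,
          ((if ¬T₁ i ω ≤ C₁ i ω ∧ T₂ i ω ≤ C₂ i ω ∧
              min (T₂ i ω) (C₂ i ω) ∈ Set.Icc (2 : ℝ) 3 then (1 / 2 : ℝ) else 0)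
            + (if T₁ i ω ≤ C₁ i ω ∧ ¬T₂ i ω ≤ C₂ i ω ∧
              min (T₁ i ω) (C₁ i ω) ∈ Set.Icc (1 : ℝ) 2 then (1 / 2 : ℝ) else 0)))
      atTop (nhds (1 / 6)) := by
  set D : ℕ → Ω → (ℝ × ℝ) × (ℝ × ℝ) := fun i ω => ((T₁ i ω, T₂ i ω), (C₁ i ω, C₂ i ω)) with hD
  have hmapX : ∀ j, μ.map (fun ω => pruittf (D j ω)) = (pruittP₀.prod pruittG).map pruittf := by
    intro j
    rw [← hlaw j, Measure.map_map measurable_pruittf (hmeas j)]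
    rfl
  have hint : Integrable (fun ω => pruittf (D 0 ω)) μ := by
    have h0 : Integrable pruittf (μ.map (D 0)) := by rw [hD, hlaw 0]; exact integrable_pruittf
    exact (integrable_map_measure measurable_pruittf.aestronglyMeasurable
      (hmeas 0).aemeasurable).1 h0
  have hident : ∀ i, IdentDistrib (fun ω => pruittf (D i ω)) (fun ω => pruittf (D 0 ω)) μ μ :=
    fun i => ⟨(measurable_pruittf.comp (hmeas i)).aemeasurable,
      (measurable_pruittf.comp (hmeas 0)).aemeasurable, by rw [hmapX i, hmapX 0]⟩
  have hpind : Pairwise (Function.onFun (IndepFun · · μ) fun i ω => pruittf (D i ω)) := by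
    intro i j hij
    exact (hindep.comp (fun _ => pruittf) (fun _ => measurable_pruittf)).indepFun hij
  have hSLLN := strong_law_ae_real (fun i ω => pruittf (D i ω)) hint hpind hident
  have hE : μ[fun ω => pruittf (D 0 ω)] = 1 / 6 := by
    have h := integral_map (μ := μ) (φ := D 0) (hmeas 0).aemeasurable
      measurable_pruittf.aestronglyMeasurable
    rw [hD, hlaw 0, integral_pruittf] at h
    exact h.symm
  rw [hE] at hSLLN
  filter_upwards [hSLLN] with ω hω
  have heq : (fun n : ℕ =>
      (1 / (n : ℝ)) * ∑ i ∈ Finset.range n,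
        ((if ¬T₁ i ω ≤ C₁ i ω ∧ T₂ i ω ≤ C₂ i ω ∧
            min (T₂ i ω) (C₂ i ω) ∈ Set.Icc (2 : ℝ) 3 then (1 / 2 : ℝ) else 0)
          + (if T₁ i ω ≤ C₁ i ω ∧ ¬T₂ i ω ≤ C₂ i ω ∧
            min (T₁ i ω) (C₁ i ω) ∈ Set.Icc (1 : ℝ) 2 then (1 / 2 : ℝ) else 0)))
      = fun n : ℕ => (∑ i ∈ Finset.range n, pruittf (D i ω)) / n := by
    funext n
    rw [one_div, inv_mul_eq_div]
    rfl
  rw [heq]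
  exact hω
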